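/- If f : ℝ → ℝ is left-continuous at every point outside a countable set D ⊆ ℝ, then f is Borel measurable. -/

import Mathlib

open Filter Topology

/-- If `f : ℝ → ℝ` is left-continuous at every point outside a countable set
`D`, then `f` is Borel measurable. -/
theorem measurable_of_leftContinuousAt_compl_countable (f : ℝ → ℝ)
    (D : Set ℝ) (hD : D.Countable)
    (hf : ∀ x ∉ D, ContinuousWithinAt f (Set.Iic x) x) : Measurable f := by
  -- dyadic left approximations
  set g : ℕ → ℝ → ℝ := fun n x => (⌊x * 2 ^ n⌋ : ℝ) / 2 ^ n with hg
  have hpow : ∀ n : ℕ, (0 : ℝ) < 2 ^ n := fun n => by positivity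
  have hle : ∀ n x, g n x ≤ x := by
    intro n x
    rw [hg, div_le_iff₀ (hpow n)]
    exact Int.floor_le _
  have hgt : ∀ n x, x - 1 / 2 ^ n ≤ g n x := by
    intro n x
    rw [hg, sub_le_iff_le_add, ← add_div, le_div_iff₀ (hpow n)]
    exact (Int.lt_floor_add_one (x * 2 ^ n)).le
  have htend : ∀ x, Tendsto (fun n => g n x) atTop (𝓝 x) := by
    intro x
    have h2 : Tendsto (fun n : ℕ => (1 / 2 : ℝ) ^ n) atTop (𝓝 0) :=
      tendsto_pow_atTop_nhds_zero_of_lt_one (by norm_num) (by norm_num)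
    simp only [one_div_pow] at h2
    have h1 : Tendsto (fun n : ℕ => x - 1 / 2 ^ n) atTop (𝓝 x) := by
      simpa using tendsto_const_nhds.sub h2
    exact tendsto_of_tendsto_of_tendsto_of_le_of_le h1 tendsto_const_nhds
      (fun n => hgt n x) (fun n => hle n x)
  -- each approximation, patched on D, is measurable
  classical
  set F : ℕ → ℝ → ℝ := fun n => D.piecewise f (fun x => f (g n x)) with hF
  have hFn : ∀ n, Measurable (F n) := by
    intro n
    intro s hs
    rw [hF, Set.piecewise_preimage]
    have hfn : Measurable fun x : ℝ => f (g n x) := by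
      have : (fun x : ℝ => f (g n x)) =
          (fun k : ℤ => f ((k : ℝ) / 2 ^ n)) ∘ fun x : ℝ => ⌊x * 2 ^ n⌋ := rfl
      rw [this]
      exact (measurable_from_top).comp ((measurable_id.mul_const _).floor)
    exact MeasurableSet.union
      ((hD.mono Set.inter_subset_right).measurableSet)
      ((hfn hs).inter hD.measurableSet.compl)
  -- pointwise convergence F n → f
  have hlim : ∀ x, Tendsto (fun n => F n x) atTop (𝓝 (f x)) := by
    intro x
    by_cases hx : x ∈ D
    · simp only [hF, Set.piecewise_eq_of_mem _ _ _ hx]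
      exact tendsto_const_nhds
    · simp only [hF, Set.piecewise_eq_of_notMem _ _ _ hx]
      have hmem : Tendsto (fun n => g n x) atTop (𝓝[Set.Iic x] x) :=
        tendsto_nhdsWithin_of_tendsto_nhds_of_eventually_within _ (htend x)
          (Eventually.of_forall fun n => hle n x)
      exact (hf x hx).tendsto.comp hmem
  exact measurable_of_tendsto_metrizable hFn (tendsto_pi_nhds.2 hlim)
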